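/- Let N ≥ 1 and let M be the N×N real matrix with diagonal entries M_ii = o_i := g_i + d_i·Σ_{j=1}^N a_{ij} and off-diagonal entries M_ij = −d_{ij}·a_{ij} for i ≠ j, where a_{ij} ∈ {0,1} with a_{ii} = 0, g_i ≥ 0, d_i > 0 and d_{ij} > 0. Set r_i := Σ_{j=1}^N d_{ij}·a_{ij}. Suppose there exists a permutation κ of {1,…,N} such that o_{κ(1)} > r_{κ(1)} and o_{κ(i+1)} − o_{κ(i)} > r_{κ(i+1)} + r_{κ(i)} for all i = 1,…,N−1. Then the characteristic polynomial of M has N pairwise distinct roots in ℂ, all of which are positive real numbers; in particular there exist an invertible real N×N matrix V and a real diagonal matrix Λ such that M = V·Λ·V⁻¹. -/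

import Mathlib

open Matrix Polynomial


/-- Sign of determinant of a strictly (row) diagonally dominant real matrix equals
the sign of the product of its diagonal entries. -/
lemma aux_det_mul_prod_pos {n : ℕ} (A : Matrix (Fin n) (Fin n) ℝ)
    (h : ∀ k, ∑ j ∈ Finset.univ.erase k, |A k j| < |A k k|) :
    0 < A.det * ∏ i, A i i := by
  classical
  set f : ℝ → ℝ :=
    fun t => (Matrix.of fun i j : Fin n => if i = j then A i j else t * A i j).det with hf
  have hcont : Continuous f := by
    apply Continuous.matrix_det
    apply continuous_matrix
    intro i j
    by_cases hij : i = j <;> simp [hij] <;> fun_prop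
  have hne : ∀ t ∈ Set.Icc (0:ℝ) 1, f t ≠ 0 := by
    intro t ht
    apply det_ne_zero_of_sum_row_lt_diag
    intro k
    have habs : |t| ≤ 1 := abs_le.2 ⟨by linarith [ht.1], ht.2⟩
    calc ∑ j ∈ Finset.univ.erase k,
          ‖(Matrix.of fun i j : Fin n => if i = j then A i j else t * A i j) k j‖
        = ∑ j ∈ Finset.univ.erase k, |t| * |A k j| := by
          apply Finset.sum_congr rfl
          intro j hj
          have hkj : ¬ (k = j) := fun h' => (Finset.mem_erase.1 hj).1 h'.symm
          simp [Matrix.of_apply, hkj, Real.norm_eq_abs, abs_mul]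
      _ ≤ ∑ j ∈ Finset.univ.erase k, |A k j| := by
          apply Finset.sum_le_sum
          intro j _
          exact mul_le_of_le_one_left (abs_nonneg _) habs
      _ < |A k k| := h k
      _ = ‖(Matrix.of fun i j : Fin n => if i = j then A i j else t * A i j) k k‖ := by
          simp [Matrix.of_apply, Real.norm_eq_abs]
  have hf0 : f 0 = ∏ i, A i i := by
    have : (Matrix.of fun i j : Fin n => if i = j then A i j else (0:ℝ) * A i j)
        = Matrix.diagonal (fun i => A i i) := by
      ext i j
      by_cases hij : i = j <;> simp [hij, Matrix.diagonal_apply]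
    rw [hf]; simp only [this, Matrix.det_diagonal]
  have hf1 : f 1 = A.det := by
    have : (Matrix.of fun i j : Fin n => if i = j then A i j else (1:ℝ) * A i j) = A := by
      ext i j; by_cases hij : i = j <;> simp [hij]
    rw [hf]; simp only [this]
  have h0 : f 0 ≠ 0 := hne 0 (by constructor <;> norm_num)
  have h1 : f 1 ≠ 0 := hne 1 (by constructor <;> norm_num)
  rw [← hf0, ← hf1]
  rcases lt_or_gt_of_ne h0 with hneg | hpos
  · rcases lt_or_gt_of_ne h1 with hneg1 | hpos1
    · exact mul_pos_of_neg_of_neg hneg1 hneg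
    · exfalso
      have : (0:ℝ) ∈ Set.Icc (f 0) (f 1) := ⟨le_of_lt hneg, le_of_lt hpos1⟩
      obtain ⟨t, ht, hft⟩ := intermediate_value_Icc (by norm_num : (0:ℝ) ≤ 1)
        hcont.continuousOn this
      exact hne t ht hft
  · rcases lt_or_gt_of_ne h1 with hneg1 | hpos1
    · exfalso
      have : (0:ℝ) ∈ Set.Icc (f 1) (f 0) := ⟨le_of_lt hneg1, le_of_lt hpos⟩
      obtain ⟨t, ht, hft⟩ := intermediate_value_Icc' (by norm_num : (0:ℝ) ≤ 1)
        hcont.continuousOn this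
      exact hne t ht hft
    · exact mul_pos hpos1 hpos

/-- Evaluation of the characteristic polynomial. -/
lemma aux_charpoly_eval {n : ℕ} (M : Matrix (Fin n) (Fin n) ℝ) (x : ℝ) :
    M.charpoly.eval x = (x • (1 : Matrix (Fin n) (Fin n) ℝ) - M).det := by
  rw [Matrix.charpoly, ← Polynomial.coe_evalRingHom, RingHom.map_det]
  congr 1
  ext i j
  by_cases hij : i = j
  · subst hij
    simp [Matrix.charmatrix_apply_eq, Matrix.one_apply, Matrix.smul_apply]
  · simp [Matrix.charmatrix_apply_ne _ _ _ hij, Matrix.one_apply, hij, Matrix.smul_apply]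

/-- Lemma 1: Under the Geršgorin-disc separation condition, the matrix `M = L_d + P`
has `N` pairwise distinct eigenvalues, all positive real numbers; in particular
`M` is diagonalizable over `ℝ`. -/
theorem stmt_0 (N : ℕ) (hN : 1 ≤ N)
    (a : Fin N → Fin N → ℝ) (g d : Fin N → ℝ) (dij : Fin N → Fin N → ℝ)
    (ha : ∀ i j, a i j = 0 ∨ a i j = 1) (haii : ∀ i, a i i = 0)
    (hg : ∀ i, 0 ≤ g i) (hd : ∀ i, 0 < d i) (hdij : ∀ i j, 0 < dij i j)
    (o r : Fin N → ℝ)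
    (ho : ∀ i, o i = g i + d i * ∑ j, a i j)
    (hr : ∀ i, r i = ∑ j, dij i j * a i j)
    (M : Matrix (Fin N) (Fin N) ℝ)
    (hM : ∀ i j, M i j = if i = j then o i else -(dij i j * a i j))
    (κ : Fin N → Fin N) (hκ : Function.Bijective κ)
    (h1 : r (κ ⟨0, hN⟩) < o (κ ⟨0, hN⟩))
    (h2 : ∀ i : ℕ, (hi : i + 1 < N) →
      r (κ ⟨i + 1, hi⟩) + r (κ ⟨i, Nat.lt_of_succ_lt hi⟩) <
        o (κ ⟨i + 1, hi⟩) - o (κ ⟨i, Nat.lt_of_succ_lt hi⟩)) :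
    ((M.charpoly.map (algebraMap ℝ ℂ)).roots.toFinset.card = N ∧
      ∀ z ∈ (M.charpoly.map (algebraMap ℝ ℂ)).roots, z.im = 0 ∧ 0 < z.re) ∧
    ∃ V Λ : Matrix (Fin N) (Fin N) ℝ, IsUnit V.det ∧
      (∃ l : Fin N → ℝ, Λ = Matrix.diagonal l) ∧ M = V * Λ * V⁻¹ := by
  classical
  have ha01 : ∀ i j, 0 ≤ a i j := fun i j => by rcases ha i j with h | h <;> simp [h]
  have hr0 : ∀ i, 0 ≤ r i := by
    intro i
    rw [hr i]
    exact Finset.sum_nonneg fun j _ => mul_nonneg (hdij i j).le (ha01 i j)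
  -- off-diagonal absolute row sums equal `r`
  have hrow : ∀ i, ∑ j ∈ Finset.univ.erase i, |M i j| = r i := by
    intro i
    have hc : ∀ j ∈ Finset.univ.erase i, |M i j| = dij i j * a i j := by
      intro j hj
      have hji : ¬ i = j := fun h => (Finset.mem_erase.1 hj).1 h.symm
      rw [hM i j, if_neg hji, abs_neg, abs_of_nonneg (mul_nonneg (hdij i j).le (ha01 i j))]
    rw [Finset.sum_congr rfl hc, hr i,
      ← Finset.add_sum_erase Finset.univ (fun j => dij i j * a i j) (Finset.mem_univ i),
      haii i, mul_zero, zero_add]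
  -- ordered centers and radii
  set O : ℕ → ℝ := fun k => if h : k < N then o (κ ⟨k, h⟩) else 0 with hOdef
  set R : ℕ → ℝ := fun k => if h : k < N then r (κ ⟨k, h⟩) else 0 with hRdef
  have hOk : ∀ k (h : k < N), O k = o (κ ⟨k, h⟩) := fun k h => dif_pos h
  have hRk : ∀ k (h : k < N), R k = r (κ ⟨k, h⟩) := fun k h => dif_pos h
  have hRnn : ∀ k, k < N → 0 ≤ R k := fun k h => by rw [hRk k h]; exact hr0 _
  have h00 : R 0 < O 0 := by rw [hOk 0 hN, hRk 0 hN]; exact h1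
  have hgap1 : ∀ k, k + 1 < N → O k + R k < O (k + 1) - R (k + 1) := by
    intro k hk
    have h2' := h2 k hk
    rw [hOk (k + 1) hk, hRk (k + 1) hk, hOk k (Nat.lt_of_succ_lt hk),
      hRk k (Nat.lt_of_succ_lt hk)]
    linarith
  have hgap : ∀ m k, k < N → m < k → O m + R m < O k - R k := by
    intro m k
    induction k with
    | zero => omega
    | succ k ih =>
      intro hk hmk
      rcases Nat.lt_succ_iff_lt_or_eq.1 hmk with h' | h'
      · have hkN : k < N := Nat.lt_of_succ_lt hk
        have i1 := ih hkN h'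
        have i2 := hgap1 k hk
        have i3 := hRnn k hkN
        linarith
      · subst h'; exact hgap1 m hk
  have hpos : ∀ k, k < N → 0 < O k - R k := by
    intro k
    induction k with
    | zero => intro _; linarith [h00]
    | succ k ih =>
      intro hk
      have hkN : k < N := Nat.lt_of_succ_lt hk
      have i1 := ih hkN
      have i2 := hgap1 k hk
      have i3 := hRnn k hkN
      linarith
  have hub_mono : ∀ m k, m ≤ k → k < N → O m + R m ≤ O k + R k := by
    intro m k hmk hk
    rcases eq_or_lt_of_le hmk with rfl | h'
    · exact le_rfl
    · have := hgap m k hk h'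
      have := hRnn k hk
      linarith
  -- sample points
  set X : ℕ → ℝ := fun k =>
    if k = 0 then 0
    else if h : k < N then (O (k - 1) + R (k - 1) + (O k - R k)) / 2
    else O (N - 1) + R (N - 1) + 1 with hXdef
  have hX0 : X 0 = 0 := by simp [hXdef]
  have hXmid : ∀ k, k ≠ 0 → ∀ h : k < N, X k = (O (k - 1) + R (k - 1) + (O k - R k)) / 2 := by
    intro k h0 h
    simp only [hXdef]
    rw [if_neg h0, dif_pos h]
  have hXtop : ∀ k, k ≠ 0 → ¬ k < N → X k = O (N - 1) + R (N - 1) + 1 := by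
    intro k h0 h
    simp only [hXdef]
    rw [if_neg h0, dif_neg h]
  have hXhigh : ∀ k m, k ≤ m → m < N → X k < O m - R m := by
    intro k m hkm hm
    rcases Nat.eq_zero_or_pos k with rfl | hk0
    · rw [hX0]; exact hpos m hm
    · have hkN : k < N := lt_of_le_of_lt hkm hm
      have hk0' : k ≠ 0 := Nat.pos_iff_ne_zero.1 hk0
      rw [hXmid k hk0' hkN]
      have hmid : (O (k - 1) + R (k - 1) + (O k - R k)) / 2 < O k - R k := by
        have := hgap (k - 1) k hkN (by omega)
        linarith
      have hle : O k - R k ≤ O m - R m := by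
        rcases eq_or_lt_of_le hkm with rfl | h'
        · exact le_rfl
        · have := hgap k m hm h'
          have := hRnn k hkN
          linarith
      linarith
  have hXlow : ∀ k, k ≤ N → ∀ m, m < N → m < k → O m + R m < X k := by
    intro k hkN m hm hmk
    have hk0 : k ≠ 0 := by omega
    by_cases hkltN : k < N
    · rw [hXmid k hk0 hkltN]
      have h1' : O m + R m ≤ O (k - 1) + R (k - 1) :=
        hub_mono m (k - 1) (by omega) (by omega)
      have h2' := hgap (k - 1) k hkltN (by omega)
      linarith
    · rw [hXtop k hk0 hkltN]
      have h1' : O m + R m ≤ O (N - 1) + R (N - 1) :=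
        hub_mono m (N - 1) (by omega) (by omega)
      linarith
  -- index via κ
  have hκidx : ∀ i : Fin N, ∃ (m : ℕ) (hm : m < N), κ ⟨m, hm⟩ = i := by
    intro i
    obtain ⟨m, hmi⟩ := hκ.2 i
    exact ⟨m.1, m.2, by rw [Fin.eta]; exact hmi⟩
  -- separation of diagonal from radii at sample points
  have hsep : ∀ k, k ≤ N → ∀ i : Fin N, r i < |o i - X k| := by
    intro k hk i
    obtain ⟨m, hm, rfl⟩ := hκidx i
    rw [← hOk m hm, ← hRk m hm]
    rcases Nat.lt_or_ge m k with hmk | hmk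
    · have hl := hXlow k hk m hm hmk
      have := hRnn m hm
      rw [abs_of_neg (by linarith)]
      linarith
    · have hh := hXhigh k m hmk hm
      have := hRnn m hm
      rw [abs_of_pos (by linarith)]
      linarith
  have hAdiag : ∀ (k : ℕ) (i : Fin N),
      (M - X k • (1 : Matrix (Fin N) (Fin N) ℝ)) i i = o i - X k := by
    intro k i
    simp [Matrix.sub_apply, Matrix.smul_apply, Matrix.one_apply, hM i i]
  have hsdd : ∀ k, k ≤ N →
      0 < (M - X k • (1 : Matrix (Fin N) (Fin N) ℝ)).det * ∏ i, (o i - X k) := by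
    intro k hk
    have hprod : ∏ i, (M - X k • (1 : Matrix (Fin N) (Fin N) ℝ)) i i
        = ∏ i, (o i - X k) := Finset.prod_congr rfl fun i _ => hAdiag k i
    rw [← hprod]
    apply aux_det_mul_prod_pos
    intro i
    have hoff : ∑ j ∈ Finset.univ.erase i,
        |(M - X k • (1 : Matrix (Fin N) (Fin N) ℝ)) i j| = r i := by
      rw [← hrow i]
      apply Finset.sum_congr rfl
      intro j hj
      have hij : ¬ i = j := fun h => (Finset.mem_erase.1 hj).1 h.symm
      congr 1
      simp [Matrix.sub_apply, Matrix.smul_apply, Matrix.one_apply, hij]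
    rw [hoff, hAdiag k i]
    exact hsep k hk i
  -- products at consecutive sample points have opposite signs
  have hprodneg : ∀ k, k < N → (∏ i, (o i - X k)) * (∏ i, (o i - X (k + 1))) < 0 := by
    intro k hk
    rw [← Finset.prod_mul_distrib]
    have hmem : κ ⟨k, hk⟩ ∈ Finset.univ := Finset.mem_univ _
    rw [← Finset.mul_prod_erase Finset.univ _ hmem]
    apply mul_neg_of_neg_of_pos
    · have hh := hXhigh k k le_rfl hk
      have hl := hXlow (k + 1) hk k hk (Nat.lt_succ_self k)
      have hRn := hRnn k hk
      rw [← hOk k hk]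
      apply mul_neg_of_pos_of_neg <;> linarith
    · apply Finset.prod_pos
      intro i hi
      obtain ⟨m, hm, rfl⟩ := hκidx i
      have hne : m ≠ k := by
        intro h
        subst h
        exact (Finset.mem_erase.1 hi).1 rfl
      rw [← hOk m hm]
      have hRn := hRnn m hm
      rcases Nat.lt_or_ge m k with h' | h'
      · have ha1 := hXlow k hk.le m hm h'
        have ha2 := hXlow (k + 1) hk m hm (h'.trans (Nat.lt_succ_self k))
        apply mul_pos_of_neg_of_neg <;> linarith
      · have h'' : k + 1 ≤ m := by omega
        have hb1 := hXhigh k m (by omega) hm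
        have hb2 := hXhigh (k + 1) m h'' hm
        apply mul_pos <;> linarith
  set p := M.charpoly with hpdef
  have hsign : ∀ k, k < N → p.eval (X k) * p.eval (X (k + 1)) < 0 := by
    intro k hk
    have hdetrel : ∀ y : ℝ, p.eval y
        = (-1 : ℝ) ^ N * (M - y • (1 : Matrix (Fin N) (Fin N) ℝ)).det := by
      intro y
      rw [hpdef, aux_charpoly_eval, show (y • (1 : Matrix (Fin N) (Fin N) ℝ) - M)
        = -(M - y • (1 : Matrix (Fin N) (Fin N) ℝ)) from (neg_sub _ _).symm,
        Matrix.det_neg, Fintype.card_fin]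
    rw [hdetrel (X k), hdetrel (X (k + 1))]
    have h11 : ((-1 : ℝ) ^ N) * ((-1 : ℝ) ^ N) = 1 := by
      rw [← pow_add]
      exact Even.neg_one_pow ⟨N, rfl⟩
    have hA := hsdd k hk.le
    have hB := hsdd (k + 1) hk
    have hP := hprodneg k hk
    nlinarith [mul_pos hA hB]
  have hXmono : ∀ k, k < N → X k < X (k + 1) := by
    intro k hk
    have hh := hXhigh k k le_rfl hk
    have hl := hXlow (k + 1) hk k hk (Nat.lt_succ_self k)
    have := hRnn k hk
    linarith
  have hXle : ∀ a b : ℕ, a ≤ b → b ≤ N → X a ≤ X b := by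
    intro a b hab hbN
    induction b with
    | zero => rw [Nat.le_zero.1 hab]
    | succ b ih =>
      rcases eq_or_lt_of_le hab with rfl | h'
      · exact le_rfl
      · have i1 := ih (Nat.lt_succ_iff.1 h') (le_trans (Nat.le_succ b) hbN)
        have i2 := (hXmono b (by omega)).le
        linarith
  have hXnonneg : ∀ k, k ≤ N → 0 ≤ X k := by
    intro k hk
    have := hXle 0 k (Nat.zero_le k) hk
    rwa [hX0] at this
  -- real roots by IVT
  have hroots : ∀ k, k < N → ∃ y, X k < y ∧ y < X (k + 1) ∧ p.eval y = 0 := by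
    intro k hk
    have hcont : ContinuousOn (fun y => p.eval y) (Set.Icc (X k) (X (k + 1))) :=
      (Polynomial.continuous p).continuousOn
    have hs := hsign k hk
    rcases lt_or_ge (p.eval (X k)) 0 with hneg | hge
    · have hposy : 0 < p.eval (X (k + 1)) := by nlinarith
      obtain ⟨y, hy, hy0⟩ := intermediate_value_Ioo (hXmono k hk).le hcont ⟨hneg, hposy⟩
      exact ⟨y, hy.1, hy.2, hy0⟩
    · have hposx : 0 < p.eval (X k) := by
        rcases eq_or_lt_of_le hge with h' | h'
        · exfalso; rw [← h'] at hs; simp at hs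
        · exact h'
      have hnegy : p.eval (X (k + 1)) < 0 := by nlinarith
      obtain ⟨y, hy, hy0⟩ := intermediate_value_Ioo' (hXmono k hk).le hcont ⟨hnegy, hposx⟩
      exact ⟨y, hy.1, hy.2, hy0⟩
  choose lam hlam1 hlam2 hlam3 using hroots
  set L : Fin N → ℝ := fun k => lam k.1 k.2 with hLdef
  have hLmono : ∀ j k : Fin N, j < k → L j < L k := by
    intro j k hjk
    have e1 := hlam2 j.1 j.2
    have e2 := hlam1 k.1 k.2
    have e3 := hXle (j.1 + 1) k.1 hjk (k.2).le
    simp only [hLdef]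
    linarith
  have hLinj : Function.Injective L := by
    intro j k h
    by_contra hne
    rcases lt_or_gt_of_ne hne with h' | h'
    · exact absurd h (ne_of_lt (hLmono j k h'))
    · exact absurd h.symm (ne_of_lt (hLmono k j h'))
  have hLpos : ∀ k : Fin N, 0 < L k := by
    intro k
    have e1 := hlam1 k.1 k.2
    have e2 := hXnonneg k.1 (k.2).le
    simp only [hLdef]
    linarith
  have hLroot : ∀ k : Fin N, p.eval (L k) = 0 := fun k => hlam3 k.1 k.2
  -- complex roots
  have hmonic : p.Monic := M.charpoly_monic
  have hdeg : p.natDegree = N := by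
    rw [hpdef, Matrix.charpoly_natDegree_eq_dim, Fintype.card_fin]
  set P := p.map (algebraMap ℝ ℂ) with hPdef
  have hPdeg : P.natDegree = N := by
    rw [hPdef, hmonic.natDegree_map, hdeg]
  have hPne : P ≠ 0 := (hmonic.map _).ne_zero
  have hsplits : P.Splits :=
    IsAlgClosed.splits _
  have hcard : Multiset.card P.roots = N :=
    (Polynomial.splits_iff_card_roots.mp hsplits).trans hPdeg
  have hmemroot : ∀ k : Fin N, ((L k : ℝ) : ℂ) ∈ P.roots := by
    intro k
    rw [Polynomial.mem_roots hPne]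
    rw [Polynomial.IsRoot, hPdef, show ((L k : ℝ) : ℂ) = algebraMap ℝ ℂ (L k) from rfl,
      Polynomial.eval_map, Polynomial.eval₂_at_apply, hLroot k, map_zero]
  have hinj2 : Function.Injective fun k : Fin N => ((L k : ℝ) : ℂ) := by
    intro j k h
    simp only at h
    exact hLinj (by exact_mod_cast h)
  set S := Finset.image (fun k : Fin N => ((L k : ℝ) : ℂ)) Finset.univ with hSdef
  have hScard : S.card = N := by
    rw [hSdef, Finset.card_image_of_injective _ hinj2, Finset.card_univ, Fintype.card_fin]
  have hSsub : S ⊆ P.roots.toFinset := by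
    intro z hz
    rw [Multiset.mem_toFinset]
    obtain ⟨k, _, rfl⟩ := Finset.mem_image.1 hz
    exact hmemroot k
  have htcard : P.roots.toFinset.card = N :=
    le_antisymm (le_trans (Multiset.toFinset_card_le _) hcard.le)
      (hScard ▸ Finset.card_le_card hSsub)
  have hSeq : S = P.roots.toFinset :=
    Finset.eq_of_subset_of_card_le hSsub (by rw [htcard, hScard])
  -- eigenvectors
  have hev : ∀ k : Fin N, ∃ v : Fin N → ℝ, v ≠ 0 ∧ M *ᵥ v = L k • v := by
    intro k
    have hdet : (M - L k • (1 : Matrix (Fin N) (Fin N) ℝ)).det = 0 := by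
      have hroot := hLroot k
      rw [hpdef, aux_charpoly_eval, show (L k • (1 : Matrix (Fin N) (Fin N) ℝ) - M)
        = -(M - L k • (1 : Matrix (Fin N) (Fin N) ℝ)) from (neg_sub _ _).symm,
        Matrix.det_neg, Fintype.card_fin] at hroot
      rcases mul_eq_zero.1 hroot with h' | h'
      · exact absurd h' (pow_ne_zero N (by norm_num))
      · exact h'
    obtain ⟨v, hv0, hv⟩ := (Matrix.exists_mulVec_eq_zero_iff).2 hdet
    refine ⟨v, hv0, ?_⟩
    rw [Matrix.sub_mulVec, sub_eq_zero] at hv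
    rw [hv, Matrix.smul_mulVec, Matrix.one_mulVec]
  choose v hv0 hveq using hev
  have hli : LinearIndependent ℝ v := by
    apply Module.End.eigenvectors_linearIndependent' (Matrix.mulVecLin M) L hLinj v
    intro k
    constructor
    · rw [Module.End.mem_eigenspace_iff]
      simpa [Matrix.mulVecLin_apply] using hveq k
    · exact hv0 k
  set V : Matrix (Fin N) (Fin N) ℝ := (Matrix.of fun k i => v k i)ᵀ with hVdef
  have hVunit : IsUnit V := by
    have hrows : LinearIndependent ℝ fun k => Vᵀ k := by
      have : (fun k => Vᵀ k) = v := by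
        funext k
        rfl
      rw [this]
      exact hli
    have := (Matrix.linearIndependent_rows_iff_isUnit (A := Vᵀ)).1 hrows
    rwa [Matrix.isUnit_transpose] at this
  have hVdet : IsUnit V.det := (Matrix.isUnit_iff_isUnit_det V).1 hVunit
  refine ⟨⟨htcard, ?_⟩, V, Matrix.diagonal L, hVdet, ⟨L, rfl⟩, ?_⟩
  · intro z hz
    have hzS : z ∈ S := by
      rw [hSeq]
      exact Multiset.mem_toFinset.2 hz
    obtain ⟨k, _, rfl⟩ := Finset.mem_image.1 hzS
    exact ⟨Complex.ofReal_im _, by rw [Complex.ofReal_re]; exact hLpos k⟩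
  · have hMV : M * V = V * Matrix.diagonal L := by
      ext i k
      rw [Matrix.mul_apply, Matrix.mul_diagonal]
      have hcol : ∑ j, M i j * V j k = (M *ᵥ v k) i := by
        rw [Matrix.mulVec, dotProduct]
        rfl
      rw [hcol, hveq k]
      simp [hVdef, Pi.smul_apply, smul_eq_mul, mul_comm]
    calc M = M * (V * V⁻¹) := by rw [Matrix.mul_nonsing_inv V hVdet, mul_one]
      _ = M * V * V⁻¹ := by rw [Matrix.mul_assoc]
      _ = V * Matrix.diagonal L * V⁻¹ := by rw [hMV]
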